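/- Let m ≥ 3 and n ≥ 1 be integers. Let c be a finite sequence of positive integers with R'(c) ⊆ T(n) and T(n) \ R'(c) nonempty, and let g be the least element of T(n) \ R'(c). Let d be a finite sequence of positive integers with R'(d) = T(g+1). Then the concatenated sequence c followed by d satisfies R'(c ⌢ d) = T(n) \ {g}. -/

import Mathlib

/-- `s` is a generalized `m`-gonal number, i.e. `s = ((m-2)u^2 - (m-4)u)/2` for some `u ∈ ℤ`. -/
def IsGP (m s : ℤ) : Prop := ∃ u : ℤ, 2 * s = (m - 2) * u ^ 2 - (m - 4) * u

/-- `R'(a)`: the set of nonzero integers represented by the `m`-gonal form with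
coefficient sequence `a`, i.e. expressible as `a₁s₁ + ⋯ + aₖsₖ` with each `sᵢ ∈ GP_m`. -/
def Rset (m : ℤ) (a : List ℤ) : Set ℤ :=
  {x | x ≠ 0 ∧ ∃ s : List ℤ, s.length = a.length ∧ (∀ y ∈ s, IsGP m y) ∧
      x = (List.zipWith (· * ·) a s).sum}

lemma zip_mul_replicate_zero (l : List ℤ) :
    (List.zipWith (· * ·) l (List.replicate l.length 0)).sum = 0 := by
  induction l with
  | nil => simp
  | cons a t ih => rw [List.length_cons, List.replicate_succ, List.zipWith_cons_cons, List.sum_cons, ih]; ring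

/-- If `R'(c) ⊆ T(n)`, `g` is the least element of the nonempty set `T(n) \ R'(c)`,
and `R'(d) = T(g+1)`, then the concatenation satisfies `R'(c ⌢ d) = T(n) \ {g}`. -/
theorem concat_represents (m n : ℤ) (hm : 3 ≤ m) (hn : 1 ≤ n)
    (c d : List ℤ) (hc : ∀ x ∈ c, 0 < x) (hd : ∀ x ∈ d, 0 < x)
    (hsub : Rset m c ⊆ Set.Ici n) (g : ℤ)
    (hg : IsLeast (Set.Ici n \ Rset m c) g)
    (hdg : Rset m d = Set.Ici (g + 1)) :
    Rset m (c ++ d) = Set.Ici n \ {g} := by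
  have hgn : n ≤ g := hg.1.1
  have hgc : g ∉ Rset m c := hg.1.2
  ext x
  simp only [Set.mem_diff, Set.mem_Ici, Set.mem_singleton_iff]
  constructor
  · rintro ⟨hx0, s, hlen, hGP, hsum⟩
    set s1 := s.take c.length with hs1
    set s2 := s.drop c.length with hs2
    have hs : s = s1 ++ s2 := (List.take_append_drop _ _).symm
    have hlen' : s.length = c.length + d.length := by simpa using hlen
    have hl1 : s1.length = c.length := by
      rw [hs1, List.length_take]; omega
    have hl2 : s2.length = d.length := by
      rw [hs2, List.length_drop]; omega
    have hsplit : List.zipWith (· * ·) (c ++ d) s =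
        List.zipWith (· * ·) c s1 ++ List.zipWith (· * ·) d s2 := by
      rw [hs]; exact List.zipWith_append hl1.symm
    set A := (List.zipWith (· * ·) c s1).sum with hA'
    set B := (List.zipWith (· * ·) d s2).sum with hB'
    have hx : x = A + B := by rw [hsum, hsplit, List.sum_append]
    have hA : A = 0 ∨ A ∈ Rset m c := by
      by_cases h : A = 0
      · exact Or.inl h
      · exact Or.inr ⟨h, s1, hl1, fun y hy => hGP y (by rw [hs]; exact List.mem_append_left _ hy), rfl⟩
    have hB : B = 0 ∨ B ∈ Rset m d := by
      by_cases h : B = 0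
      · exact Or.inl h
      · exact Or.inr ⟨h, s2, hl2, fun y hy => hGP y (by rw [hs]; exact List.mem_append_right _ hy), rfl⟩
    rcases hA with hA | hA <;> rcases hB with hB | hB
    · omega
    · rw [hdg] at hB
      simp only [Set.mem_Ici] at hB
      omega
    · have hxc : x ∈ Rset m c := by rw [hx, hB, add_zero]; exact hA
      exact ⟨hsub hxc, fun h => hgc (h ▸ hxc)⟩
    · have hAn : n ≤ A := hsub hA
      rw [hdg] at hB
      simp only [Set.mem_Ici] at hB
      omega
  · rintro ⟨hxn, hxg⟩
    by_cases hxc : x ∈ Rset m c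
    · obtain ⟨hx0, s1, hl1, hGP1, hsum1⟩ := hxc
      refine ⟨hx0, s1 ++ List.replicate d.length 0, by simp [hl1], ?_, ?_⟩
      · intro y hy
        rcases List.mem_append.1 hy with h | h
        · exact hGP1 y h
        · rw [List.eq_of_mem_replicate h]
          exact ⟨0, by ring⟩
      · rw [List.zipWith_append hl1.symm, List.sum_append,
          zip_mul_replicate_zero, ← hsum1, add_zero]
    · have hxd : x ∈ Rset m d := by
        rw [hdg]
        have : n ≤ x ∧ x ∉ Rset m c := ⟨hxn, hxc⟩
        have hgx : g ≤ x := hg.2 ⟨hxn, hxc⟩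
        simp only [Set.mem_Ici]; omega
      obtain ⟨hx0, s2, hl2, hGP2, hsum2⟩ := hxd
      refine ⟨hx0, List.replicate c.length 0 ++ s2, by simp [hl2], ?_, ?_⟩
      · intro y hy
        rcases List.mem_append.1 hy with h | h
        · rw [List.eq_of_mem_replicate h]
          exact ⟨0, by ring⟩
        · exact hGP2 y h
      · rw [List.zipWith_append (by simp), List.sum_append,
          zip_mul_replicate_zero, ← hsum2, zero_add]
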